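/- Let F be a field and let M, N be p×q matrices over F. If M and N have the same null space, i.e., for every x ∈ F^q one has M·x = 0 if and only if N·x = 0, then M and N are row equivalent: there exists an invertible p×p matrix P with N = P * M. -/

import Mathlib

open Matrix

/-- `E.IsPivot i j` : sweeping row `i` of `E` from the left, the first nonzero
entry is met at column `j` (i.e. `E i j ≠ 0` and all entries to its left vanish). -/
def Matrix.IsPivot {F : Type*} [Field F] {p q : ℕ}
    (E : Matrix (Fin p) (Fin q) F) (i : Fin p) (j : Fin q) : Prop :=
  E i j ≠ 0 ∧ ∀ j' : Fin q, j' < j → E i j' = 0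

/-- `E` is in row reduced echelon form:
(1) the first nonzero entry of every nonzero row is `1`;
(2) a pivot is the only nonzero entry of its column;
(3) a pivot in a lower row lies in a column strictly to the right;
(4) zero rows are at the bottom. -/
def Matrix.IsRREF {F : Type*} [Field F] {p q : ℕ}
    (E : Matrix (Fin p) (Fin q) F) : Prop :=
  (∀ i j, E.IsPivot i j → E i j = 1) ∧
  (∀ i j, E.IsPivot i j → ∀ i' : Fin p, i' ≠ i → E i' j = 0) ∧
  (∀ i₁ j₁ i₂ j₂, E.IsPivot i₁ j₁ → E.IsPivot i₂ j₂ → i₁ < i₂ → j₁ < j₂) ∧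
  (∀ i i' : Fin p, i ≤ i' → (∀ j, E i j = 0) → ∀ j, E i' j = 0)

/-- Two `p × q` matrices are row equivalent iff one is obtained from the
other by left multiplication by an invertible `p × p` matrix. -/
def Matrix.RowEquiv {F : Type*} [Field F] {p q : ℕ}
    (M N : Matrix (Fin p) (Fin q) F) : Prop :=
  ∃ P : Matrix (Fin p) (Fin p) F, IsUnit P ∧ N = P * M

/-- Matrices with the same null space are row equivalent. -/
theorem rowEquiv_of_same_nullspace {F : Type*} [Field F] {p q : ℕ}
    (M N : Matrix (Fin p) (Fin q) F)
    (h : ∀ x : Fin q → F, M.mulVec x = 0 ↔ N.mulVec x = 0) :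
    ∃ P : Matrix (Fin p) (Fin p) F, IsUnit P ∧ N = P * M := by
  classical
  set f := M.mulVecLin with hf
  set g := N.mulVecLin with hg
  have hker : LinearMap.ker f = LinearMap.ker g := by
    ext x
    simp only [LinearMap.mem_ker, hf, hg, Matrix.mulVecLin_apply]
    exact h x
  obtain ⟨c1, hc1⟩ := Submodule.exists_isCompl (LinearMap.range f)
  obtain ⟨c2, hc2⟩ := Submodule.exists_isCompl (LinearMap.range g)
  let erange : LinearMap.range f ≃ₗ[F] LinearMap.range g :=
    f.quotKerEquivRange.symm ≪≫ₗ Submodule.quotEquivOfEq _ _ hker ≪≫ₗ g.quotKerEquivRange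
  have hfr : ∀ v, ((erange ⟨f v, LinearMap.mem_range_self f v⟩ : LinearMap.range g) : Fin p → F) = g v := by
    intro v
    have h1 : f.quotKerEquivRange.symm ⟨f v, LinearMap.mem_range_self f v⟩
        = Submodule.Quotient.mk v := by
      rw [LinearEquiv.symm_apply_eq]
      exact Subtype.ext (f.quotKerEquivRange_apply_mk v).symm
    simp only [erange, LinearEquiv.trans_apply, h1, Submodule.quotEquivOfEq_mk,
      LinearMap.quotKerEquivRange_apply_mk]
  have hdim : Module.finrank F c1 = Module.finrank F c2 := by
    have e1 := Submodule.finrank_add_eq_of_isCompl hc1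
    have e2 := Submodule.finrank_add_eq_of_isCompl hc2
    have := erange.finrank_eq
    omega
  let d : c1 ≃ₗ[F] c2 := LinearEquiv.ofFinrankEq _ _ hdim
  let e' : (Fin p → F) ≃ₗ[F] (Fin p → F) :=
    (Submodule.prodEquivOfIsCompl _ _ hc1).symm ≪≫ₗ (LinearEquiv.prodCongr erange d) ≪≫ₗ
      Submodule.prodEquivOfIsCompl _ _ hc2
  have key : ∀ v, e' (f v) = g v := by
    intro v
    have h1 : (Submodule.prodEquivOfIsCompl (LinearMap.range f) c1 hc1).symm (f v)
        = ((⟨f v, LinearMap.mem_range_self f v⟩ : LinearMap.range f), 0) :=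
      Submodule.prodEquivOfIsCompl_symm_apply_left (h := hc1) (x := ⟨f v, LinearMap.mem_range_self f v⟩)
    show Submodule.prodEquivOfIsCompl _ _ hc2
        ((LinearEquiv.prodCongr erange d) ((Submodule.prodEquivOfIsCompl _ _ hc1).symm (f v))) = g v
    rw [h1]
    show (((erange ⟨f v, LinearMap.mem_range_self f v⟩) : LinearMap.range g) : Fin p → F)
        + ((d 0 : c2) : Fin p → F) = g v
    rw [d.map_zero]
    simpa using hfr v
  refine ⟨LinearMap.toMatrix' e'.toLinearMap, ?_, ?_⟩
  · have hmul : LinearMap.toMatrix' e'.toLinearMap * LinearMap.toMatrix' e'.symm.toLinearMap = 1 := by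
      rw [← LinearMap.toMatrix'_comp]
      simp
    exact ⟨⟨_, _, hmul, mul_eq_one_comm.mp hmul⟩, rfl⟩
  · have hv : ∀ v, N *ᵥ v = (LinearMap.toMatrix' e'.toLinearMap * M) *ᵥ v := by
      intro v
      rw [← Matrix.mulVec_mulVec]
      have h2 : (LinearMap.toMatrix' e'.toLinearMap) *ᵥ (M *ᵥ v) = e' (M *ᵥ v) := by
        rw [← Matrix.toLin'_apply, Matrix.toLin'_toMatrix']
        rfl
      rw [h2]
      exact (key v).symm
    ext i j
    have h3 := congrFun (hv (Pi.single j 1)) i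
    simpa [Matrix.mulVec_single] using h3
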